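/- Let n ≥ 3 and let t, u be nonzero, distinct, coprime elements of Z_n (represented by integers with 0 < t, u < n and gcd(t, u) = 1). The groupoid Z_n(t, u), with operation a * b = t·a + u·b (mod n), is a semigroup (i.e., * is associative) if and only if t² ≡ t (mod n) and u² ≡ u (mod n). -/
import Mathlib

/-- The groupoid `Zₙ(t,u)` with `a * b = t·a + u·b (mod n)` is a semigroup iff
`t² ≡ t (mod n)` and `u² ≡ u (mod n)`. -/
theorem stmt_11 (n t u : ℕ) (hn : 3 ≤ n) (ht : 0 < t) (ht' : t < n)
    (hu : 0 < u) (hu' : u < n) (htu : t ≠ u) (hcop : Nat.gcd t u = 1) :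
    (∀ a b c : ZMod n,
        (t : ZMod n) * ((t : ZMod n) * a + (u : ZMod n) * b) + (u : ZMod n) * c
          = (t : ZMod n) * a + (u : ZMod n) * ((t : ZMod n) * b + (u : ZMod n) * c))
      ↔ (t * t ≡ t [MOD n] ∧ u * u ≡ u [MOD n]) := by
  constructor
  · intro h
    constructor
    · have h1 := h 1 0 0
      rw [← ZMod.natCast_eq_natCast_iff]
      push_cast
      linear_combination h1
    · have h2 := h 0 0 1
      rw [← ZMod.natCast_eq_natCast_iff]
      push_cast
      linear_combination -h2
  · rintro ⟨h1, h2⟩ a b c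
    have h1' : (t : ZMod n) * t = t := by
      rw [← Nat.cast_mul, ZMod.natCast_eq_natCast_iff]; exact h1
    have h2' : (u : ZMod n) * u = u := by
      rw [← Nat.cast_mul, ZMod.natCast_eq_natCast_iff]; exact h2
    linear_combination a * h1' - c * h2'
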